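/- Let S be a type, n a natural number, and x : Fin n → S a function whose image has cardinality at least n − 1 (i.e., at most two of the values x(1),…,x(n) coincide). If σ ∈ Equiv.Perm (Fin n) is an even permutation (σ lies in the alternating subgroup, equivalently sign σ = 1) with σ ≠ 1, then x ∘ σ ≠ x. -/

import Mathlib

/-- Counting lemma: two distinct colliding pairs force the range small. -/
lemma key10 {S : Type*} {n : ℕ} (x : Fin n → S) (a b c d : Fin n)
    (hab : a ≠ b) (hda : d ≠ a) (hdb : d ≠ b) (hcd : c ≠ d)
    (h1 : x a = x b) (h2 : x c = x d) : (Set.range x).ncard ≤ n - 2 := by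
  classical
  have hsub : Set.range x ⊆ ↑(((Finset.univ.erase b).erase d).image x) := by
    rintro _ ⟨w, rfl⟩
    simp only [Finset.coe_image, Set.mem_image, Finset.mem_coe, Finset.mem_erase,
      Finset.mem_univ, and_true]
    by_cases hwb : w = b
    · exact ⟨a, ⟨hda.symm, hab⟩, by rw [hwb, ← h1]⟩
    by_cases hwd : w = d
    · by_cases hcb : c = b
      · exact ⟨a, ⟨hda.symm, hab⟩, by rw [hwd, ← h2, hcb, ← h1]⟩
      · exact ⟨c, ⟨hcd, hcb⟩, by rw [hwd, ← h2]⟩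
    · exact ⟨w, ⟨hwd, hwb⟩, rfl⟩
  have h3 : (Set.range x).ncard ≤ (((Finset.univ.erase b).erase d).image x).card := by
    have := Set.ncard_le_ncard hsub (Finset.finite_toSet _)
    rwa [Set.ncard_coe_finset] at this
  have h4 : (((Finset.univ.erase b).erase d).image x).card ≤
      ((Finset.univ.erase b).erase d).card := Finset.card_image_le
  have h5 : ((Finset.univ.erase b).erase d).card = n - 2 := by
    rw [Finset.card_erase_of_mem (by simp [hdb]), Finset.card_erase_of_mem (by simp)]
    simp [Nat.sub_sub]
  omega

/-- If at most two of the values of `x : Fin n → S` coincide (the image has cardinality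
at least `n - 1`), then no nontrivial even permutation fixes `x`: the alternating group
acts freely on such tuples. -/
theorem stmt10 {S : Type*} {n : ℕ} (x : Fin n → S)
    (hx : n - 1 ≤ (Set.range x).ncard)
    (σ : Equiv.Perm (Fin n)) (hσ : σ ∈ alternatingGroup (Fin n)) (hσ1 : σ ≠ 1) :
    x ∘ ⇑σ ≠ x := by
  classical
  intro h
  have hfix : ∀ w, x (σ w) = x w := fun w => congrFun h w
  obtain ⟨i, hi⟩ : ∃ i, σ i ≠ i := by
    by_contra hc
    push_neg at hc
    exact hσ1 (Equiv.ext hc)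
  have hn : 2 ≤ n := by
    have h2 : 1 < Fintype.card (Fin n) := Fintype.one_lt_card_iff_nontrivial.mpr ⟨⟨σ i, i, hi⟩⟩
    simp at h2
    omega
  have hle : ¬ (Set.range x).ncard ≤ n - 2 := by omega
  by_cases hA : σ (σ i) = i
  · -- σ swaps i and σ i; since σ is even, σ ≠ swap, so another point moves
    by_cases hk : ∃ k, k ≠ i ∧ k ≠ σ i ∧ σ k ≠ k
    · obtain ⟨k, hki, hkj, hkm⟩ := hk
      exact hle (key10 x (σ i) i (σ k) k hi hkj hki hkm (hfix i) (hfix k))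
    · push_neg at hk
      have hswap : σ = Equiv.swap i (σ i) := by
        apply Equiv.ext
        intro w
        by_cases hwi : w = i
        · simp [hwi, Equiv.swap_apply_left]
        by_cases hwj : w = σ i
        · rw [hwj, hA, Equiv.swap_apply_right]
        · rw [Equiv.swap_apply_of_ne_of_ne hwi hwj]
          by_contra hc
          exact hc (hk w hwi hwj)
      have hsign := Equiv.Perm.mem_alternatingGroup.mp hσ
      rw [hswap, Equiv.Perm.sign_swap (Ne.symm hi)] at hsign
      exact absurd hsign (by decide)
  · -- orbit of i has length ≥ 3
    have hne : σ i ≠ σ (σ i) := fun hc => hi (σ.injective hc).symm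
    exact hle (key10 x (σ i) i (σ i) (σ (σ i)) hi hne.symm hA hne (hfix i) (hfix (σ i)).symm)
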